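/- Suppose a simulated likelihood p_S(y|θ, u) is an unbiased estimator of the true likelihood, i.e. ∫ p_S(y|θ, u) p(u) du = p(y|θ) for every θ, where p(u) is a density not depending on θ. Then the θ-marginal of the extended posterior p_S(θ, u|y) ∝ p_S(y|θ, u) p(θ) p(u) equals the true posterior p(θ|y) ∝ p(y|θ) p(θ): that is, ∫ p_S(θ, u|y) du = p(θ|y). -/
import Mathlib


open MeasureTheory

/-- If the simulated likelihood is unbiased, the θ-marginal of the extended posterior
p_S(θ,u|y) ∝ p_S(y|θ,u)p(θ)p(u) equals the true posterior p(θ|y) ∝ p(y|θ)p(θ). -/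
theorem extended_posterior_marginal {Θ U : Type*} [MeasurableSpace Θ] [MeasurableSpace U]
    (νΘ : Measure Θ) (νU : Measure U)
    (pS : Θ → U → ℝ) (pθ : Θ → ℝ) (pu : U → ℝ) (L : Θ → ℝ) (py : ℝ)
    (hpS0 : ∀ θ u, 0 ≤ pS θ u) (hpθ0 : ∀ θ, 0 ≤ pθ θ) (hpu0 : ∀ u, 0 ≤ pu u)
    (hunbiased : ∀ θ, ∫ u, pS θ u * pu u ∂νU = L θ)
    (hint : ∀ θ, Integrable (fun u => pS θ u * pu u) νU)
    (hpy : py = ∫ θ, L θ * pθ θ ∂νΘ) (hpypos : 0 < py) :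
    ∀ θ, ∫ u, pS θ u * pθ θ * pu u / py ∂νU = L θ * pθ θ / py := by
  intro θ
  have h : (fun u => pS θ u * pθ θ * pu u / py)
      = fun u => (pθ θ / py) * (pS θ u * pu u) := by
    funext u; ring
  rw [h, integral_const_mul, hunbiased θ]
  ring
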